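/- Let ν > 1 and A > 0, set x_c = (A·ν)^{−1/(ν−1)} and μ_max = x_c − A·x_c^ν. Then μ_max > 0, and for every μ ∈ (0, μ_max) there exists x* ∈ (0, x_c) with A·(x*)^ν + μ = x*; moreover every such fixed point x* ∈ (0, x_c) satisfies A·ν·(x*)^{ν−1} < 1, i.e., it is a linearly stable fixed point of the map P(x) = A·x^ν + μ. -/
import Mathlib


open Set

/-- For the return map `P(x) = A·x^ν + μ` with `ν > 1`, `A > 0`: setting
`x_c = (A·ν)^{−1/(ν−1)}` and `μ_max = x_c − A·x_c^ν`, we have `μ_max > 0`, and for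
every `μ ∈ (0, μ_max)` there is a fixed point `x* ∈ (0, x_c)` of `P`; moreover every
such fixed point satisfies `A·ν·(x*)^{ν−1} < 1`, i.e. it is linearly stable. -/
theorem stable_fixed_point_of_return_map (ν A : ℝ) (hν : 1 < ν) (hA : 0 < A) :
    0 < (A * ν) ^ (-(1 / (ν - 1))) - A * ((A * ν) ^ (-(1 / (ν - 1)))) ^ ν ∧
    ∀ μ ∈ Ioo (0 : ℝ)
        ((A * ν) ^ (-(1 / (ν - 1))) - A * ((A * ν) ^ (-(1 / (ν - 1)))) ^ ν),
      (∃ x ∈ Ioo (0 : ℝ) ((A * ν) ^ (-(1 / (ν - 1)))), A * x ^ ν + μ = x) ∧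
      ∀ x ∈ Ioo (0 : ℝ) ((A * ν) ^ (-(1 / (ν - 1)))),
        A * x ^ ν + μ = x → A * ν * x ^ (ν - 1) < 1 := by
  have hν0 : (0:ℝ) < ν := by linarith
  have hAν : (0:ℝ) < A * ν := by positivity
  set c : ℝ := (A * ν) ^ (-(1 / (ν - 1))) with hc_def
  have hc : 0 < c := Real.rpow_pos_of_pos hAν _
  have hsub : ν - 1 ≠ 0 := by linarith
  -- key : c ^ (ν - 1) = (A*ν)⁻¹
  have hkey : c ^ (ν - 1) = (A * ν)⁻¹ := by
    rw [hc_def, ← Real.rpow_mul hAν.le]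
    have : -(1 / (ν - 1)) * (ν - 1) = -1 := by field_simp
    rw [this, Real.rpow_neg_one]
  have hAckey : A * c ^ (ν - 1) = 1 / ν := by
    rw [hkey]; field_simp
  have hcν : A * c ^ ν = c / ν := by
    have : c ^ ν = c ^ (ν - 1) * c := by
      rw [← Real.rpow_add_one hc.ne' (ν - 1)]; ring_nf
    rw [this]
    calc A * (c ^ (ν - 1) * c) = A * c ^ (ν - 1) * c := by ring
      _ = 1 / ν * c := by rw [hAckey]
      _ = c / ν := by ring
  have hμmax : 0 < c - A * c ^ ν := by
    rw [hcν]
    have : c / ν < c := by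
      rw [div_lt_iff₀ hν0]
      nlinarith
    linarith
  refine ⟨hμmax, fun μ hμ => ⟨?_, ?_⟩⟩
  · -- existence via IVT on g x = x - A * x ^ ν
    have hcont : ContinuousOn (fun x : ℝ => x - A * x ^ ν) (Icc 0 c) := by
      apply ContinuousOn.sub continuousOn_id
      apply ContinuousOn.mul continuousOn_const
      exact fun x _ => (Real.continuousAt_rpow_const x ν (Or.inr hν0.le)).continuousWithinAt
    have hIVT := intermediate_value_Ioo hc.le hcont
    have h0 : (fun x : ℝ => x - A * x ^ ν) 0 = 0 := by
      simp [Real.zero_rpow hν0.ne']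
    have hμ' : μ ∈ Ioo ((fun x : ℝ => x - A * x ^ ν) 0) ((fun x : ℝ => x - A * x ^ ν) c) := by
      rw [h0]; exact hμ
    obtain ⟨x, hx, hgx⟩ := hIVT hμ'
    exact ⟨x, hx, by simp only at hgx; linarith⟩
  · -- stability
    intro x hx _
    have hlt : x ^ (ν - 1) < c ^ (ν - 1) :=
      Real.rpow_lt_rpow hx.1.le hx.2 (by linarith)
    have : A * ν * x ^ (ν - 1) < A * ν * c ^ (ν - 1) := by
      apply mul_lt_mul_of_pos_left hlt hAν
    rw [hkey, mul_inv_cancel₀ hAν.ne'] at this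
    exact this
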